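/- arXiv:1310.3130 — 4 statements merged into one kernel-verified Lean document; each statement's English description precedes it below -/
import Mathlib

section
/- Fix r > 1. Then as N → ∞ through the positive integers, ( (∫_{N r²}^∞ t^{N−1} e^{−t} dt) / (N−1)! ) · √(2πN) (r² − 1) e^{N(r²−1)} r^{−2N} → 1. Equivalently, the Γ = 2 soft-disk density satisfies ρ_N(√N r) ∼ e^{−N(r²−1)} e^{2N log r} / (π √(2πN) (r² − 1)) as N → ∞. -/
open MeasureTheory Real Filter Set Topology

lemma Jlim (c : ℝ) (hc : 1 < c) :
    Tendsto (fun N : ℕ => ∫ s in Ioi (0:ℝ), (1 + s / (N * c)) ^ (N - 1) * Real.exp (-s))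
      atTop (𝓝 (c / (c - 1))) := by
  have hc0 : (0:ℝ) < c := lt_trans one_pos hc
  set b : ℝ := (c - 1) / c with hbdef
  have hb : 0 < b := div_pos (by linarith) hc0
  have key : Tendsto (fun N : ℕ => ∫ s in Ioi (0:ℝ), (1 + s / (N * c)) ^ (N - 1) * Real.exp (-s))
      atTop (𝓝 (∫ s in Ioi (0:ℝ), Real.exp (-(b * s)))) := by
    apply MeasureTheory.tendsto_integral_filter_of_dominated_convergence
      (fun s => Real.exp (-(b * s)))
    · filter_upwards with N
      exact ((by fun_prop : Continuous fun s : ℝ =>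
        (1 + s / (N * c)) ^ (N - 1) * Real.exp (-s))).aestronglyMeasurable
    · filter_upwards [eventually_ge_atTop 1] with N hN
      filter_upwards [ae_restrict_mem measurableSet_Ioi] with s hs
      have hs0 : (0:ℝ) < s := hs
      have hN0 : (0:ℝ) < N := by exact_mod_cast hN
      have hNc : (0:ℝ) < N * c := mul_pos hN0 hc0
      have h1 : (0:ℝ) ≤ 1 + s / (N * c) := by positivity
      have h2 : (1 + s / (N * c)) ^ (N - 1) ≤ Real.exp (s / (N * c)) ^ (N - 1) := by
        apply pow_le_pow_left₀ h1
        linarith [Real.add_one_le_exp (s / (N * c))]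
      have h3 : Real.exp (s / (N * c)) ^ (N - 1) = Real.exp ((N - 1 : ℕ) * (s / (N * c))) :=
        (Real.exp_nat_mul _ _).symm
      have h4 : ((N - 1 : ℕ) : ℝ) * (s / (N * c)) ≤ s / c := by
        have : ((N - 1 : ℕ) : ℝ) * (s / (N * c)) ≤ (N : ℝ) * (s / (N * c)) := by
          apply mul_le_mul_of_nonneg_right _ (by positivity)
          exact_mod_cast Nat.cast_le.mpr (Nat.sub_le N 1)
        have e : (N : ℝ) * (s / (N * c)) = s / c := by
          field_simp
        linarith [this, e ▸ this]
      have h5 : (1 + s / (N * c)) ^ (N - 1) * Real.exp (-s) ≤ Real.exp (-(b * s)) := by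
        have : (1 + s / (N * c)) ^ (N - 1) ≤ Real.exp (s / c) := by
          calc (1 + s / (N * c)) ^ (N - 1) ≤ Real.exp (s / (N * c)) ^ (N - 1) := h2
          _ = Real.exp ((N - 1 : ℕ) * (s / (N * c))) := h3
          _ ≤ Real.exp (s / c) := Real.exp_le_exp.mpr h4
        calc (1 + s / (N * c)) ^ (N - 1) * Real.exp (-s)
            ≤ Real.exp (s / c) * Real.exp (-s) :=
              mul_le_mul_of_nonneg_right this (Real.exp_pos _).le
          _ = Real.exp (-(b * s)) := by
              rw [← Real.exp_add]; congr 1; rw [hbdef]; field_simp; ring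
        
      rw [Real.norm_eq_abs, abs_of_nonneg (by positivity)]
      exact h5
    · have := exp_neg_integrableOn_Ioi 0 hb
      simp only [neg_mul] at this
      exact this
    · filter_upwards [ae_restrict_mem measurableSet_Ioi] with s hs
      have hs0 : (0:ℝ) < s := hs
      have hE : Tendsto (fun N : ℕ => ((N - 1 : ℕ) : ℝ) * Real.log (1 + s / (N * c)))
          atTop (𝓝 (s / c)) := by
        have h1 : Tendsto (fun N : ℕ => (N : ℝ) * Real.log (1 + (s / c) / N)) atTop
            (𝓝 (s / c)) :=
          (Real.tendsto_mul_log_one_add_div_atTop (s / c)).comp tendsto_natCast_atTop_atTop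
        have h2 : Tendsto (fun N : ℕ => Real.log (1 + (s / c) / N)) atTop (𝓝 0) := by
          have : Tendsto (fun N : ℕ => 1 + (s / c) / (N:ℝ)) atTop (𝓝 1) := by
            simpa using (tendsto_const_div_atTop_nhds_zero_nat (s / c)).const_add 1
          have h := ((Real.continuousAt_log one_ne_zero).tendsto.comp this)
          rw [Real.log_one] at h
          exact h
        have h3 := h1.sub h2
        rw [sub_zero] at h3
        apply h3.congr'
        filter_upwards [eventually_ge_atTop 1] with N hN
        have hN0 : (N:ℝ) ≠ 0 := by positivity
        have e1 : (s / c) / (N:ℝ) = s / (N * c) := by rw [div_div, mul_comm]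
        have e2 : ((N - 1 : ℕ) : ℝ) = (N:ℝ) - 1 := by
          rw [Nat.cast_sub hN]; norm_num
        rw [e1, e2]; ring
      have hP : Tendsto (fun N : ℕ => (1 + s / (N * c)) ^ (N - 1)) atTop
          (𝓝 (Real.exp (s / c))) := by
        apply (Real.continuous_exp.tendsto _).comp hE |>.congr'
        filter_upwards [eventually_ge_atTop 1] with N hN
        have hN0 : (0:ℝ) < N := by exact_mod_cast hN
        have hx : (0:ℝ) < 1 + s / (N * c) := by positivity
        simp only [Function.comp]
        rw [Real.exp_nat_mul, Real.exp_log hx]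
      have heq : Real.exp (s / c) * Real.exp (-s) = Real.exp (-(b * s)) := by
        rw [← Real.exp_add]; congr 1; rw [hbdef]; field_simp; ring
      rw [← heq]
      exact hP.mul tendsto_const_nhds
  have hval : (∫ s in Ioi (0:ℝ), Real.exp (-(b * s))) = c / (c - 1) := by
    have h := integral_exp_neg_mul_rpow one_pos hb
    rw [show (1/1+1 : ℝ) = 2 by norm_num, Real.Gamma_two,
      show (-1/1 : ℝ) = -1 by norm_num, rpow_neg_one, mul_one] at h
    have h2 : (∫ s in Ioi (0:ℝ), Real.exp (-(b * s))) = b⁻¹ := by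
      simpa [neg_mul, rpow_one] using h
    rw [h2, hbdef, inv_div] 
  rw [← hval]
  exact key

lemma shiftInt (n : ℕ) (a : ℝ) :
    ∫ t in Ioi a, t ^ n * Real.exp (-t) = ∫ s in Ioi (0:ℝ), (s + a) ^ n * Real.exp (-(s + a)) := by
  rw [← MeasureTheory.MeasurePreserving.setIntegral_preimage_emb
        (measurePreserving_add_right volume a)
        (measurableEmbedding_addRight a) (fun t => t ^ n * Real.exp (-t)) (Ioi a)]
  congr 1
  ext x; simp

lemma Ifactor (n : ℕ) (a : ℝ) (ha : 0 < a) :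
    ∫ t in Ioi a, t ^ n * Real.exp (-t) =
      (a ^ n * Real.exp (-a)) * ∫ s in Ioi (0:ℝ), (1 + s / a) ^ n * Real.exp (-s) := by
  rw [shiftInt, ← integral_const_mul]
  apply integral_congr_ae
  filter_upwards with s
  have h : s + a = a * (1 + s / a) := by field_simp; ring
  rw [show (s + a) ^ n = a ^ n * (1 + s / a) ^ n from by rw [h, mul_pow],
    neg_add, Real.exp_add]
  ring

/-- Large-`N` asymptotics of the `Γ = 2` soft-disk density outside the droplet. -/
theorem soft_disk_density_asymptotics (r : ℝ) (hr : 1 < r) :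
    Tendsto
      (fun N : ℕ =>
        ((∫ t in Set.Ioi ((N : ℝ) * r ^ 2), t ^ (N - 1) * Real.exp (-t)) /
            (Nat.factorial (N - 1) : ℝ)) *
          (Real.sqrt (2 * Real.pi * N) * (r ^ 2 - 1) * Real.exp ((N : ℝ) * (r ^ 2 - 1)) /
            r ^ (2 * N)))
      atTop (nhds 1)
    ∧
    Tendsto
      (fun N : ℕ =>
        ((1 / Real.pi) * (∫ t in Set.Ioi ((N : ℝ) * r ^ 2), t ^ (N - 1) * Real.exp (-t)) /
            (Nat.factorial (N - 1) : ℝ)) /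
          (Real.exp (-(N : ℝ) * (r ^ 2 - 1)) * Real.exp (2 * N * Real.log r) /
            (Real.pi * Real.sqrt (2 * Real.pi * N) * (r ^ 2 - 1))))
      atTop (nhds 1) := by
  have hr0 : (0:ℝ) < r := lt_trans one_pos hr
  set c : ℝ := r ^ 2 with hcdef
  have hc : 1 < c := by nlinarith
  have hc0 : (0:ℝ) < c := lt_trans one_pos hc
  have hc1 : c - 1 ≠ 0 := by linarith
  have hπ : (0:ℝ) < π := pi_pos
  have hsπ : Real.sqrt π ≠ 0 := by positivity
  -- the first limit
  have main : Tendsto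
      (fun N : ℕ =>
        ((∫ t in Set.Ioi ((N : ℝ) * c), t ^ (N - 1) * Real.exp (-t)) /
            (Nat.factorial (N - 1) : ℝ)) *
          (Real.sqrt (2 * π * N) * (c - 1) * Real.exp ((N : ℝ) * (c - 1)) /
            r ^ (2 * N)))
      atTop (𝓝 1) := by
    have hg : Tendsto (fun N : ℕ =>
        (∫ s in Ioi (0:ℝ), (1 + s / (N * c)) ^ (N - 1) * Real.exp (-s)) * ((c - 1) / c) *
          (Real.sqrt π / Stirling.stirlingSeq N)) atTop
        (𝓝 (c / (c - 1) * ((c - 1) / c) * (Real.sqrt π / Real.sqrt π))) :=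
      ((Jlim c hc).mul tendsto_const_nhds).mul
        (tendsto_const_nhds.div Stirling.tendsto_stirlingSeq_sqrt_pi hsπ)
    rw [show c / (c - 1) * ((c - 1) / c) * (Real.sqrt π / Real.sqrt π) = 1 from by
      field_simp] at hg
    apply hg.congr'
    filter_upwards [eventually_ge_atTop 1] with N hN
    have hN0 : (0:ℝ) < N := by exact_mod_cast hN
    have hNc : (0:ℝ) < (N:ℝ) * c := mul_pos hN0 hc0
    rw [Ifactor (N - 1) _ hNc]
    set J := ∫ s in Ioi (0:ℝ), (1 + s / (N * c)) ^ (N - 1) * Real.exp (-s) with hJ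
    have hF : (0:ℝ) < (Nat.factorial (N - 1) : ℝ) := by exact_mod_cast (N-1).factorial_pos
    have hfact : ((Nat.factorial N : ℝ)) = (N : ℝ) * (Nat.factorial (N - 1) : ℝ) := by
      exact_mod_cast congrArg (Nat.cast (R := ℝ)) (Nat.mul_factorial_pred (by omega)).symm
    have hs2N : (0:ℝ) < Real.sqrt (2 * N) := by positivity
    have hpowN : (N:ℝ) ^ N = (N:ℝ) ^ (N - 1) * N := by
      rw [← pow_succ, Nat.sub_add_cancel hN]
    have hpowc : c ^ N = c ^ (N - 1) * c := by
      rw [← pow_succ, Nat.sub_add_cancel hN]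
    have hrc : r ^ (2 * N) = c ^ N := by rw [pow_mul]
    have hsqrt : Real.sqrt (2 * π * N) = Real.sqrt π * Real.sqrt (2 * N) := by
      rw [show 2 * π * (N:ℝ) = π * (2 * N) from by ring, Real.sqrt_mul hπ.le]
    have hexp : Real.exp (-((N:ℝ) * c)) * Real.exp ((N:ℝ) * (c - 1)) =
        (Real.exp N)⁻¹ := by
      rw [← Real.exp_add, ← Real.exp_neg]
      congr 1; ring
    have hstir : Stirling.stirlingSeq N =
        (Nat.factorial N : ℝ) / (Real.sqrt (2 * N) * ((N : ℝ) / Real.exp 1) ^ N) := rfl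
    have hde : ((N:ℝ) / Real.exp 1) ^ N = (N:ℝ) ^ N / Real.exp N := by
      rw [div_pow, Real.exp_one_pow]
    have hEN : Real.exp (N:ℝ) ≠ 0 := (Real.exp_pos _).ne'
    have hENc : Real.exp ((N:ℝ) * c) ≠ 0 := (Real.exp_pos _).ne'
    have hsplit : Real.exp ((N:ℝ) * (c - 1)) =
        Real.exp ((N:ℝ) * c) * (Real.exp (N:ℝ))⁻¹ := by
      rw [← Real.exp_neg, ← Real.exp_add]; congr 1; ring
    have hneg : Real.exp (-((N:ℝ) * c)) = (Real.exp ((N:ℝ) * c))⁻¹ := Real.exp_neg _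
    rw [hrc, hsqrt, hstir, hde, hpowN, hpowc, hfact, mul_pow, hsplit, hneg]
    field_simp
  constructor
  · exact main
  · apply main.congr'
    filter_upwards [eventually_ge_atTop 1] with N hN
    have hN0 : (0:ℝ) < N := by exact_mod_cast hN
    have hS : (0:ℝ) < Real.sqrt (2 * π * N) := by positivity
    have hR : (0:ℝ) < r ^ (2 * N) := by positivity
    have hF : (0:ℝ) < (Nat.factorial (N - 1) : ℝ) := by exact_mod_cast (N-1).factorial_pos
    have hexp2 : Real.exp (2 * (N:ℝ) * Real.log r) = r ^ (2 * N) := by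
      rw [show 2 * (N:ℝ) * Real.log r = ((2 * N : ℕ) : ℝ) * Real.log r from by
        push_cast; ring, Real.exp_nat_mul, Real.exp_log hr0]
    have hexp3 : Real.exp (-(N:ℝ) * (c - 1)) = (Real.exp ((N:ℝ) * (c - 1)))⁻¹ := by
      rw [neg_mul, Real.exp_neg]
    rw [hexp2, hexp3]
    set I := ∫ t in Set.Ioi ((N : ℝ) * c), t ^ (N - 1) * Real.exp (-t) with hI
    have hE3 : Real.exp ((N:ℝ) * (c - 1)) ≠ 0 := (Real.exp_pos _).ne'
    field_simp
end

section
/- Fix y < 0. Let S_N(y) = Σ_{a=0}^{N−1} e^{4πy(a+1/2)} e^{−2π(a+1/2)²/N} and g(y) = e^{2πy}/(1 − e^{4πy}). Then lim_{N→∞} N (S_N(y) − g(y)) = −2π Σ_{a=0}^∞ (a+1/2)² e^{4πy(a+1/2)}. Consequently the Γ = 2 soft-cylinder density ρ_N(√N y) = √(2/N) e^{−2πN y²} S_N(y) satisfies √(N/2) e^{2πN y²} ρ_N(√N y) = g(y) − (2π/N) Σ_{a=0}^∞ (a+1/2)² e^{4πy(a+1/2)} + o(1/N) as N → ∞. -/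
open MeasureTheory Real Filter Asymptotics Topology

private lemma exp_lim (c : ℝ) :
    Tendsto (fun N : ℕ => (N:ℝ) * (Real.exp (-c / N) - 1)) atTop (𝓝 (-c)) := by
  have hd : HasDerivAt (fun x : ℝ => Real.exp (-c * x)) (-c) 0 := by
    simpa using ((hasDerivAt_id (0:ℝ)).const_mul (-c)).exp
  rw [hasDerivAt_iff_tendsto_slope, slope_fun_def_field] at hd
  have hnz : Tendsto (fun N : ℕ => 1/(N:ℝ)) atTop (𝓝[≠] (0:ℝ)) := by
    apply tendsto_nhdsWithin_of_tendsto_nhds_of_eventually_within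
    · exact tendsto_one_div_atTop_nhds_zero_nat
    · filter_upwards [eventually_ge_atTop 1] with N hN
      simp only [Set.mem_compl_iff, Set.mem_singleton_iff]
      positivity
  refine (hd.comp hnz).congr' ?_
  filter_upwards [eventually_ge_atTop 1] with N hN
  have hN0 : (N:ℝ) ≠ 0 := by positivity
  simp only [Function.comp]
  field_simp
  simp only [mul_zero, neg_zero, Real.exp_zero]
  ring

private lemma main_lim (y : ℝ) (hy : y < 0) :
    Tendsto
      (fun N : ℕ =>
        (N : ℝ) *
          ((∑ a ∈ Finset.range N,
              Real.exp (4 * Real.pi * y * ((a : ℝ) + 1 / 2)) *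
                Real.exp (-2 * Real.pi * ((a : ℝ) + 1 / 2) ^ 2 / N)) -
            Real.exp (2 * Real.pi * y) / (1 - Real.exp (4 * Real.pi * y))))
      atTop
      (nhds (-2 * Real.pi *
        ∑' a : ℕ, ((a : ℝ) + 1 / 2) ^ 2 * Real.exp (4 * Real.pi * y * ((a : ℝ) + 1 / 2)))) := by
  set r := Real.exp (4*Real.pi*y) with hrdef
  have hr0 : 0 < r := Real.exp_pos _
  have hr1 : r < 1 := by rw [hrdef, Real.exp_lt_one_iff]; nlinarith [Real.pi_pos]
  set E : ℕ → ℝ := fun a => Real.exp (4 * Real.pi * y * ((a : ℝ) + 1 / 2)) with hEdef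
  have hEapp : ∀ a : ℕ, Real.exp (4 * Real.pi * y * ((a : ℝ) + 1 / 2)) = E a :=
    fun a => by rw [hEdef]
  have hE : ∀ a : ℕ, E a = Real.exp (2*Real.pi*y) * r^a := by
    intro a; rw [hEdef, hrdef, ← Real.exp_nat_mul, ← Real.exp_add]; ring_nf
  have hEpos : ∀ a, 0 < E a := fun a => Real.exp_pos _
  set c : ℕ → ℝ := fun a => 2 * Real.pi * ((a : ℝ) + 1 / 2) ^ 2 with hcdef
  have hcapp : ∀ a : ℕ, c a = 2 * Real.pi * ((a : ℝ) + 1 / 2) ^ 2 := fun a => by rw [hcdef]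
  have hc0 : ∀ a, 0 ≤ c a := fun a => by
    rw [hcapp]; have := Real.pi_pos; positivity
  have hbound : Summable (fun a : ℕ => c a * E a) := by
    have hnorm : ‖r‖ < 1 := by rwa [Real.norm_eq_abs, abs_of_pos hr0]
    have h2 : Summable (fun n : ℕ => (n:ℝ)^2 * r^n) :=
      summable_pow_mul_geometric_of_norm_lt_one 2 hnorm
    have h1 : Summable (fun n : ℕ => (n:ℝ) * r^n) := by
      simpa using summable_pow_mul_geometric_of_norm_lt_one 1 hnorm
    have h0 : Summable (fun n : ℕ => r^n) := summable_geometric_of_lt_one hr0.le hr1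
    have hsum : Summable (fun a : ℕ => 7*((a:ℝ)+1)^2 * r^a) := by
      have heq : (fun a : ℕ => 7*((a:ℝ)+1)^2 * r^a)
          = fun a : ℕ => 7*((a:ℝ)^2*r^a) + 14*((a:ℝ)*r^a) + 7*r^a := by
        funext a; ring
      rw [heq]
      exact ((h2.mul_left 7).add (h1.mul_left 14)).add (h0.mul_left 7)
    refine hsum.of_nonneg_of_le (fun a => mul_nonneg (hc0 a) (hEpos a).le) (fun a => ?_)
    rw [hE, hcapp]
    have h1' : Real.exp (2*Real.pi*y) ≤ 1 := by
      rw [Real.exp_le_one_iff]; nlinarith [Real.pi_pos]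
    have hq : 2*Real.pi*((a:ℝ)+1/2)^2 ≤ 7*((a:ℝ)+1)^2 := by
      nlinarith [Nat.cast_nonneg (α := ℝ) a, Real.pi_lt_d2]
    calc 2*Real.pi*((a:ℝ)+1/2)^2 * (Real.exp (2*Real.pi*y) * r^a)
        ≤ 7*((a:ℝ)+1)^2 * (1 * r^a) := by
          apply mul_le_mul hq ?_ (by positivity) (by positivity)
          exact mul_le_mul_of_nonneg_right h1' (by positivity)
      _ = 7*((a:ℝ)+1)^2 * r^a := by ring
  have hEsum : Summable E := by
    have h0 : Summable (fun n : ℕ => r^n) := summable_geometric_of_lt_one hr0.le hr1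
    simpa [funext hE] using h0.mul_left (Real.exp (2*Real.pi*y))
  have hgeq : Real.exp (2 * Real.pi * y) / (1 - r) = ∑' a, E a := by
    simp_rw [hE]
    rw [tsum_mul_left, tsum_geometric_of_lt_one hr0.le hr1]
    ring
  set F : ℕ → ℕ → ℝ := fun N a =>
    (N:ℝ) * ((if a < N then E a * Real.exp (-(c a) / N) else 0) - E a) with hFdef
  have hsumF : ∀ N : ℕ, (N : ℝ) *
      ((∑ a ∈ Finset.range N, E a * Real.exp (-2 * Real.pi * ((a : ℝ) + 1 / 2) ^ 2 / N))
        - Real.exp (2 * Real.pi * y) / (1 - r)) = ∑' a, F N a := by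
    intro N
    have hexpeq : ∀ a : ℕ, Real.exp (-2 * Real.pi * ((a : ℝ) + 1 / 2) ^ 2 / (N:ℝ))
        = Real.exp (-(c a) / (N:ℝ)) := by
      intro a; rw [hcapp]; congr 1; ring
    have hif : Summable (fun a => if a < N then E a * Real.exp (-(c a) / (N:ℝ)) else 0) := by
      apply summable_of_ne_finset_zero (s := Finset.range N)
      intro a ha
      simp only [Finset.mem_range] at ha
      simp [ha]
    have htsumif : (∑' a, if a < N then E a * Real.exp (-(c a) / (N:ℝ)) else 0)
        = ∑ a ∈ Finset.range N, E a * Real.exp (-(c a) / (N:ℝ)) := by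
      rw [tsum_eq_sum (s := Finset.range N) (fun b hb => by
        simp only [Finset.mem_range] at hb; simp [hb])]
      exact Finset.sum_congr rfl (fun a ha => by
        simp only [Finset.mem_range] at ha; rw [if_pos ha])
    simp_rw [hexpeq]
    rw [hFdef]
    simp only
    rw [tsum_mul_left, Summable.tsum_sub hif hEsum, htsumif, hgeq]
  have hpt : ∀ a : ℕ, Tendsto (fun N => F N a) atTop (𝓝 (E a * (-(c a)))) := by
    intro a
    refine ((exp_lim (c a)).const_mul (E a)).congr' ?_
    filter_upwards [eventually_gt_atTop a] with N hN
    rw [hFdef]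
    simp only [if_pos hN]
    ring
  have hbd : ∀ᶠ N in atTop, ∀ a, ‖F N a‖ ≤ c a * E a := by
    refine Eventually.of_forall (fun N a => ?_)
    rw [hFdef, Real.norm_eq_abs]
    simp only
    by_cases h : a < N
    · rw [if_pos h, neg_div]
      have hNpos : (0:ℝ) < N := by
        have : 0 < N := Nat.lt_of_le_of_lt (Nat.zero_le a) h
        exact_mod_cast this
      have he1 : Real.exp (-(c a / N)) ≤ 1 := by
        rw [Real.exp_le_one_iff]
        have := hc0 a
        simpa using div_nonneg this hNpos.le
      have he2 : 1 - Real.exp (-(c a / N)) ≤ c a / N := by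
        have := Real.add_one_le_exp (-(c a / N))
        linarith
      have hmul : (N:ℝ) * (1 - Real.exp (-(c a / N))) ≤ c a := by
        calc (N:ℝ) * (1 - Real.exp (-(c a / N))) ≤ (N:ℝ) * (c a / N) :=
              mul_le_mul_of_nonneg_left he2 hNpos.le
          _ = c a := by field_simp
      have hnn : 0 ≤ (N:ℝ) * E a * (1 - Real.exp (-(c a / N))) :=
        mul_nonneg (mul_nonneg hNpos.le (hEpos a).le) (by linarith)
      rw [abs_of_nonpos (by nlinarith [hnn])]
      nlinarith [mul_le_mul_of_nonneg_right hmul (hEpos a).le]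
    · rw [if_neg h]
      have hNa : (N:ℝ) ≤ (a:ℝ) := by exact_mod_cast not_lt.mp h
      have hnn : 0 ≤ (N:ℝ) * E a := mul_nonneg (Nat.cast_nonneg N) (hEpos a).le
      rw [abs_of_nonpos (by nlinarith [hnn])]
      have hca : (a:ℝ) ≤ c a := by
        rw [hcapp]
        nlinarith [Real.pi_gt_three, Nat.cast_nonneg (α := ℝ) a, sq_nonneg ((a:ℝ) - 1/2)]
      nlinarith [mul_le_mul_of_nonneg_right (hNa.trans hca) (hEpos a).le]
  have hmain := tendsto_tsum_of_dominated_convergence hbound hpt hbd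
  have hval : (∑' a : ℕ, E a * (-(c a))) = -2*Real.pi * ∑' a : ℕ, ((a:ℝ)+1/2)^2 * E a := by
    have h1 : ∀ a : ℕ, E a * (-(c a)) = (-2*Real.pi) * (((a:ℝ)+1/2)^2 * E a) :=
      fun a => by rw [hcapp]; ring
    simp_rw [h1]
    rw [tsum_mul_left]
  rw [hval] at hmain
  simp only [hEapp]
  exact hmain.congr (fun N => (hsumF N).symm)

/-- Finite-`N` correction to the `Γ = 2` soft-cylinder edge density outside the droplet. -/
theorem soft_cylinder_density_correction (y : ℝ) (hy : y < 0) :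
    Tendsto
      (fun N : ℕ =>
        (N : ℝ) *
          ((∑ a ∈ Finset.range N,
              Real.exp (4 * Real.pi * y * ((a : ℝ) + 1 / 2)) *
                Real.exp (-2 * Real.pi * ((a : ℝ) + 1 / 2) ^ 2 / N)) -
            Real.exp (2 * Real.pi * y) / (1 - Real.exp (4 * Real.pi * y))))
      atTop
      (nhds (-2 * Real.pi *
        ∑' a : ℕ, ((a : ℝ) + 1 / 2) ^ 2 * Real.exp (4 * Real.pi * y * ((a : ℝ) + 1 / 2))))
    ∧
    (fun N : ℕ =>
        Real.sqrt ((N : ℝ) / 2) * Real.exp (2 * Real.pi * N * y ^ 2) *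
          (Real.sqrt (2 / (N : ℝ)) * Real.exp (-2 * Real.pi * N * y ^ 2) *
            ∑ a ∈ Finset.range N,
              Real.exp (4 * Real.pi * y * ((a : ℝ) + 1 / 2)) *
                Real.exp (-2 * Real.pi * ((a : ℝ) + 1 / 2) ^ 2 / N)) -
          (Real.exp (2 * Real.pi * y) / (1 - Real.exp (4 * Real.pi * y)) -
            (2 * Real.pi / N) *
              ∑' a : ℕ, ((a : ℝ) + 1 / 2) ^ 2 * Real.exp (4 * Real.pi * y * ((a : ℝ) + 1 / 2))))
      =o[atTop] (fun N : ℕ => 1 / (N : ℝ)) := by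
  have h1 := main_lim y hy
  refine ⟨h1, ?_⟩
  set T : ℝ := ∑' a : ℕ, ((a : ℝ) + 1 / 2) ^ 2 * Real.exp (4 * Real.pi * y * ((a : ℝ) + 1 / 2))
    with hT
  have h2 : Tendsto
      (fun N : ℕ =>
        (N : ℝ) *
          ((∑ a ∈ Finset.range N,
              Real.exp (4 * Real.pi * y * ((a : ℝ) + 1 / 2)) *
                Real.exp (-2 * Real.pi * ((a : ℝ) + 1 / 2) ^ 2 / N)) -
            Real.exp (2 * Real.pi * y) / (1 - Real.exp (4 * Real.pi * y)))
          + 2 * Real.pi * T) atTop (𝓝 (-2 * Real.pi * T + 2 * Real.pi * T)) :=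
    h1.add tendsto_const_nhds
  rw [show -2 * Real.pi * T + 2 * Real.pi * T = 0 by ring] at h2
  rw [isLittleO_iff_tendsto']
  · refine h2.congr' ?_
    filter_upwards [eventually_ge_atTop 1] with N hN
    have hNpos : (0:ℝ) < N := by exact_mod_cast hN
    have hN0 : (N:ℝ) ≠ 0 := hNpos.ne'
    have hs : Real.sqrt ((N:ℝ)/2) * Real.sqrt (2/(N:ℝ)) = 1 := by
      rw [← Real.sqrt_mul (by positivity)]
      rw [show (N:ℝ)/2 * (2/(N:ℝ)) = 1 by field_simp]
      exact Real.sqrt_one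
    have hexp : Real.exp (2 * Real.pi * N * y ^ 2) * Real.exp (-2 * Real.pi * N * y ^ 2) = 1 := by
      rw [← Real.exp_add, show 2 * Real.pi * (N:ℝ) * y ^ 2 + -2 * Real.pi * N * y ^ 2 = 0 by ring,
        Real.exp_zero]
    set S : ℝ := ∑ a ∈ Finset.range N,
        Real.exp (4 * Real.pi * y * ((a : ℝ) + 1 / 2)) *
          Real.exp (-2 * Real.pi * ((a : ℝ) + 1 / 2) ^ 2 / N) with hS
    have hbig : Real.sqrt ((N:ℝ)/2) * Real.exp (2 * Real.pi * N * y ^ 2) *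
        (Real.sqrt (2/(N:ℝ)) * Real.exp (-2 * Real.pi * N * y ^ 2) * S) = S := by
      calc Real.sqrt ((N:ℝ)/2) * Real.exp (2 * Real.pi * N * y ^ 2) *
            (Real.sqrt (2/(N:ℝ)) * Real.exp (-2 * Real.pi * N * y ^ 2) * S)
          = (Real.sqrt ((N:ℝ)/2) * Real.sqrt (2/(N:ℝ))) *
            (Real.exp (2 * Real.pi * N * y ^ 2) * Real.exp (-2 * Real.pi * N * y ^ 2)) * S := by
            ring
        _ = S := by rw [hs, hexp]; ring
    rw [hbig]
    field_simp
    ring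
  · filter_upwards [eventually_ge_atTop 1] with N hN h
    exfalso
    have hNpos : (0:ℝ) < N := by exact_mod_cast hN
    rw [one_div] at h
    exact (inv_ne_zero hNpos.ne') h
end

section
/- There exist constants C > 0 and y₀ < 0 such that for all y ≤ y₀, | A₁(y) − ( −(1/(8√(2π))) e^{−2y²}/|y| + (1/(16π√2)) e^{−2y²}/y² + (1/(32√(2π))) e^{−2y²}/|y|³ ) | ≤ C e^{−2y²}/y⁴; that is, A₁(y) = −(1/(8√(2π))) e^{−2y²}/|y| + (1/(16π√2)) e^{−2y²}/y² + (1/(32√(2π))) e^{−2y²}/|y|³ + O(y^{−4} e^{−2y²}) as y → −∞. -/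
open MeasureTheory Real Filter

/-- The error function `erf`. -/
noncomputable def erf (x : ℝ) : ℝ := (2 / Real.sqrt Real.pi) * ∫ t in (0 : ℝ)..x, Real.exp (-t ^ 2)

/-- The complementary error function `erfc`. -/
noncomputable def erfc (x : ℝ) : ℝ := 1 - erf x

noncomputable def A₁ (y : ℝ) : ℝ :=
  -(1 / (2 * Real.sqrt (2 * Real.pi))) *
    ∫ t in Set.Ioi (0 : ℝ), Real.exp (-2 * (t - y) ^ 2) * erfc t

noncomputable def A₂ (y : ℝ) : ℝ :=
  (1 / Real.sqrt (2 * Real.pi)) *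
    ∫ t in Set.Ioi (0 : ℝ),
      Real.exp (-2 * (t - y) ^ 2) * t * (Real.exp (-t ^ 2) / Real.sqrt Real.pi - t * erfc t)

noncomputable def A₃ (y : ℝ) : ℝ :=
  (1 / 4) * (1 + erf (Real.sqrt 2 * y)) *
    (-(y * Real.exp (-2 * y ^ 2)) / Real.sqrt (2 * Real.pi) +
      (1 / 4 + y ^ 2) * (1 - erf (Real.sqrt 2 * y)))

noncomputable def A₄ (y : ℝ) : ℝ :=
  -(1 / Real.sqrt (2 * Real.pi)) *
    ∫ t₁ in Set.Ioi (0 : ℝ), ∫ t₂ in Set.Ioo (0 : ℝ) t₁,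
      (1 / (t₁ - t₂)) *
        (Real.exp (-2 * (t₁ - y) ^ 2) * (erf (t₁ - t₂) + erf (Real.sqrt 2 * (t₂ - y))) +
          Real.exp (-2 * (t₂ - y) ^ 2) * (erf (t₁ - t₂) - erf (Real.sqrt 2 * (t₁ - y))))

noncomputable def A (y : ℝ) : ℝ := A₁ y + A₂ y + A₃ y + A₄ y

set_option maxHeartbeats 1000000

open Set Nat

lemma aux_exp_upper {x : ℝ} (hx : 0 ≤ x) : Real.exp (-x) ≤ 1 - x + x^2/2 := by
  have hderiv : ∀ u : ℝ, HasDerivAt (fun v : ℝ => -Real.exp (-v)) (Real.exp (-u)) u := by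
    intro u
    exact (((hasDerivAt_neg u).exp).neg).congr_deriv (by simp)
  have hval : ∫ u in (0:ℝ)..x, Real.exp (-u) = 1 - Real.exp (-x) := by
    rw [intervalIntegral.integral_eq_sub_of_hasDerivAt (fun u _ => hderiv u)
      ((Real.continuous_exp.comp continuous_neg).intervalIntegrable 0 x)]
    simp; ring
  have hmono : ∫ u in (0:ℝ)..x, (1 - Real.exp (-u)) ≤ ∫ u in (0:ℝ)..x, u := by
    apply intervalIntegral.integral_mono_on hx
    · exact (continuous_const.sub (Real.continuous_exp.comp continuous_neg)).intervalIntegrable 0 x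
    · exact continuous_id.intervalIntegrable 0 x
    · intro u hu
      have := Real.add_one_le_exp (-u)
      linarith
  have hsub : ∫ u in (0:ℝ)..x, (1 - Real.exp (-u)) =
      (∫ u in (0:ℝ)..x, (1:ℝ)) - ∫ u in (0:ℝ)..x, Real.exp (-u) := by
    exact intervalIntegral.integral_sub (intervalIntegrable_const)
      ((Real.continuous_exp.comp continuous_neg).intervalIntegrable 0 x)
  rw [hsub, hval, intervalIntegral.integral_const, integral_id] at hmono
  simp at hmono
  nlinarith [hmono]

lemma continuous_erf : Continuous erf := by
  unfold erf
  exact continuous_const.mul (intervalIntegral.continuous_primitive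
    (fun a b => ((Real.continuous_exp.comp (by continuity)).intervalIntegrable a b)) 0)

lemma sqrt_pi_pos : 0 < Real.sqrt Real.pi := Real.sqrt_pos.mpr Real.pi_pos

lemma erf_le_mul (t : ℝ) (ht : 0 ≤ t) : erf t ≤ (2 / Real.sqrt Real.pi) * t := by
  unfold erf
  have h : ∫ u in (0:ℝ)..t, Real.exp (-u ^ 2) ≤ ∫ u in (0:ℝ)..t, (1:ℝ) := by
    apply intervalIntegral.integral_mono_on ht
      ((Real.continuous_exp.comp (by continuity)).intervalIntegrable 0 t)
      intervalIntegrable_const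
    intro u _
    show Real.exp (-u^2) ≤ 1
    exact Real.exp_le_one_iff.mpr (neg_nonpos.mpr (sq_nonneg u))
  rw [intervalIntegral.integral_const] at h
  simp at h
  have hb : (0:ℝ) ≤ 2 / Real.sqrt Real.pi := by positivity
  nlinarith

lemma erf_ge (t : ℝ) (ht : 0 ≤ t) : (2 / Real.sqrt Real.pi) * (t - t^3/3) ≤ erf t := by
  unfold erf
  have h : ∫ u in (0:ℝ)..t, (1 - u^2) ≤ ∫ u in (0:ℝ)..t, Real.exp (-u ^ 2) := by
    apply intervalIntegral.integral_mono_on ht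
      ((continuous_const.sub (continuous_pow 2)).intervalIntegrable 0 t)
      ((Real.continuous_exp.comp (by continuity)).intervalIntegrable 0 t)
    intro u _
    show 1 - u^2 ≤ Real.exp (-u^2)
    have := Real.add_one_le_exp (-u^2)
    linarith
  have hval : ∫ u in (0:ℝ)..t, (1 - u^2) = t - t^3/3 := by
    rw [intervalIntegral.integral_sub intervalIntegrable_const
      ((continuous_pow 2).intervalIntegrable 0 t), intervalIntegral.integral_const,
      integral_pow]
    simp; ring
  rw [hval] at h
  have hb : (0:ℝ) ≤ 2 / Real.sqrt Real.pi := by positivity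
  nlinarith

lemma erf_nonneg (t : ℝ) (ht : 0 ≤ t) : 0 ≤ erf t := by
  unfold erf
  have h : 0 ≤ ∫ u in (0:ℝ)..t, Real.exp (-u ^ 2) :=
    intervalIntegral.integral_nonneg ht (fun u _ => (Real.exp_pos _).le)
  positivity

lemma erf_le_one (t : ℝ) (ht : 0 ≤ t) : erf t ≤ 1 := by
  unfold erf
  have hg : IntegrableOn (fun u : ℝ => Real.exp (-u ^ 2)) (Set.Ioi 0) := by
    have := integrableOn_rpow_mul_exp_neg_mul_sq (b := 1) one_pos (s := 0) (by norm_num)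
    apply this.congr_fun ?_ measurableSet_Ioi
    intro u hu
    simp
  have h1 : ∫ u in (0:ℝ)..t, Real.exp (-u ^ 2) = ∫ u in Set.Ioc 0 t, Real.exp (-u ^ 2) := by
    rw [intervalIntegral.integral_of_le ht]
  have h2 : ∫ u in Set.Ioc 0 t, Real.exp (-u ^ 2) ≤ ∫ u in Set.Ioi (0:ℝ), Real.exp (-u ^ 2) := by
    apply setIntegral_mono_set hg
    · filter_upwards with u using (Real.exp_pos _).le
    · exact HasSubset.Subset.eventuallyLE Set.Ioc_subset_Ioi_self
  have h3 : ∫ u in Set.Ioi (0:ℝ), Real.exp (-u ^ 2) = Real.sqrt Real.pi / 2 := by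
    have := integral_gaussian_Ioi 1
    simp at this
    rw [← this]
  have hI := h2.trans h3.le
  rw [h1, div_mul_eq_mul_div, div_le_one sqrt_pi_pos]
  linarith

lemma integrableOn_pow_exp (n : ℕ) {a : ℝ} (ha : 0 < a) :
    IntegrableOn (fun t : ℝ => t ^ n * Real.exp (-(a * t))) (Set.Ioi 0) := by
  have h := integrableOn_rpow_mul_exp_neg_mul_rpow (s := (n:ℝ)) (p := 1) (b := a)
    (lt_of_lt_of_le (by norm_num) (Nat.cast_nonneg n)) one_pos ha
  apply h.congr_fun ?_ measurableSet_Ioi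
  intro u hu
  show u ^ (n:ℝ) * Real.exp (-a * u ^ (1:ℝ)) = u ^ n * Real.exp (-(a*u))
  rw [Real.rpow_natCast, Real.rpow_one, neg_mul]

lemma integral_pow_exp (n : ℕ) {a : ℝ} (ha : 0 < a) :
    ∫ t in Set.Ioi (0:ℝ), t ^ n * Real.exp (-(a * t)) = n ! / a ^ (n + 1) := by
  have h := Real.integral_rpow_mul_exp_neg_mul_Ioi (a := (n:ℝ)+1) (r := a) (by positivity) ha
  have h1 : ∫ t in Set.Ioi (0:ℝ), t ^ ((n:ℝ)+1-1) * Real.exp (-(a * t))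
      = ∫ t in Set.Ioi (0:ℝ), t ^ n * Real.exp (-(a * t)) := by
    congr 1; funext t
    rw [add_sub_cancel_right, Real.rpow_natCast]
  rw [h1] at h
  rw [h, Real.Gamma_nat_eq_factorial]
  rw [show ((n:ℝ)+1) = ((n+1 : ℕ) : ℝ) by push_cast; ring, Real.rpow_natCast]
  field_simp
  rw [← mul_pow, one_div, inv_mul_cancel₀ ha.ne', one_pow]

lemma sqrt_pi_ge_one : 1 ≤ Real.sqrt Real.pi := by
  rw [show (1:ℝ) = Real.sqrt 1 by simp]
  exact Real.sqrt_le_sqrt (by nlinarith [Real.pi_gt_three])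

lemma key_pointwise (t : ℝ) (ht : 0 ≤ t) :
    |Real.exp (-2*t^2) * erfc t - (1 - (2/Real.sqrt Real.pi)*t - 2*t^2)|
      ≤ 5*t^3 + 2*t^4 + 2*t^5 := by
  set b : ℝ := 2 / Real.sqrt Real.pi with hb
  have hb2 : b ≤ 2 := by
    rw [hb, div_le_iff₀ sqrt_pi_pos]
    nlinarith [sqrt_pi_ge_one]
  have hb0 : 0 ≤ b := by positivity
  have hE0 : 1 - 2*t^2 ≤ Real.exp (-2*t^2) := by
    have := Real.add_one_le_exp (-2*t^2); linarith
  have hE1 : Real.exp (-2*t^2) ≤ 1 - 2*t^2 + 2*t^4 := by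
    have := aux_exp_upper (x := 2*t^2) (by positivity)
    rw [show -(2*t^2) = -2*t^2 by ring] at this
    nlinarith [this]
  set s : ℝ := Real.exp (-2*t^2) - (1 - 2*t^2) with hs
  set ρ : ℝ := b*t - erf t with hρ
  have hs0 : 0 ≤ s := by rw [hs]; linarith
  have hs1 : s ≤ 2*t^4 := by rw [hs]; linarith
  have hρ0 : 0 ≤ ρ := by rw [hρ]; linarith [erf_le_mul t ht]
  have hρ1 : ρ ≤ (2/3)*t^3 := by
    have := erf_ge t ht
    have h3 : b*(t - t^3/3) = b*t - (b/3)*t^3 := by ring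
    rw [hρ]
    nlinarith [pow_nonneg ht 3]
  have hFnn : 0 ≤ 1 - erf t := by linarith [erf_le_one t ht]
  have hFle : 1 - erf t ≤ 1 := by linarith [erf_nonneg t ht]
  have hX : Real.exp (-2*t^2) * erfc t - (1 - b*t - 2*t^2)
      = (ρ - 2*t^2*ρ) + 2*b*t^3 + s*(1-erf t) := by
    unfold erfc; rw [hs, hρ]; ring
  have h2tρ : 2*t^2*ρ ≤ (4/3)*t^5 := by nlinarith [mul_le_mul_of_nonneg_left hρ1 (by positivity : (0:ℝ) ≤ 2*t^2)]
  have h2tρ0 : 0 ≤ 2*t^2*ρ := by positivity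
  have hterm3 : s*(1-erf t) ≤ s := mul_le_of_le_one_right hs0 hFle
  have hterm30 : 0 ≤ s*(1-erf t) := mul_nonneg hs0 hFnn
  have ht3 : 2*b*t^3 ≤ 4*t^3 := by nlinarith [pow_nonneg ht 3]
  have ht30 : 0 ≤ 2*b*t^3 := by positivity
  rw [abs_le, hX]
  have p3 := pow_nonneg ht 3
  have p4 := pow_nonneg ht 4
  have p5 := pow_nonneg ht 5
  clear_value s ρ
  constructor <;> nlinarith

lemma erfc_nonneg (t : ℝ) (ht : 0 ≤ t) : 0 ≤ erfc t := by
  unfold erfc; linarith [erf_le_one t ht]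
lemma erfc_le_one (t : ℝ) (ht : 0 ≤ t) : erfc t ≤ 1 := by
  unfold erfc; linarith [erf_nonneg t ht]

lemma main_term_eq (y : ℝ) (hy : y < 0) :
    -(1 / (2 * Real.sqrt (2 * Real.pi))) * (Real.exp (-2*y^2) *
        (1/(-4*y) - (2/Real.sqrt Real.pi)/(-4*y)^2 - 4/(-4*y)^3))
      = -(1 / (8 * Real.sqrt (2 * Real.pi))) * Real.exp (-2 * y ^ 2) / |y| +
        (1 / (16 * Real.pi * Real.sqrt 2)) * Real.exp (-2 * y ^ 2) / y ^ 2 +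
        (1 / (32 * Real.sqrt (2 * Real.pi))) * Real.exp (-2 * y ^ 2) / |y| ^ 3 := by
  rw [abs_of_neg hy, div_neg, show (-y)^(3:ℕ) = -(y^3) by ring, div_neg]
  have hs2π : Real.sqrt (2 * Real.pi) = Real.sqrt 2 * Real.sqrt Real.pi :=
    Real.sqrt_mul (by norm_num) _
  have hππ : Real.sqrt Real.pi * Real.sqrt Real.pi = Real.pi :=
    Real.mul_self_sqrt Real.pi_pos.le
  have h22 : Real.sqrt 2 * Real.sqrt 2 = 2 := Real.mul_self_sqrt (by norm_num)
  have hs2pos : (0:ℝ) < Real.sqrt 2 := Real.sqrt_pos.mpr (by norm_num)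
  have hsπ := sqrt_pi_pos
  have hπpos := Real.pi_pos
  have hy_ne : y ≠ 0 := ne_of_lt hy
  rw [hs2π]
  set sπ := Real.sqrt Real.pi with hsdef
  rw [← hππ]
  field_simp
  ring

/-- Asymptotic expansion of `A₁` as `y → −∞`. -/
theorem A1_asymptotics :
    ∃ C > (0 : ℝ), ∃ y₀ < (0 : ℝ), ∀ y ≤ y₀,
      |A₁ y -
          (-(1 / (8 * Real.sqrt (2 * Real.pi))) * Real.exp (-2 * y ^ 2) / |y| +
            (1 / (16 * Real.pi * Real.sqrt 2)) * Real.exp (-2 * y ^ 2) / y ^ 2 +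
            (1 / (32 * Real.sqrt (2 * Real.pi))) * Real.exp (-2 * y ^ 2) / |y| ^ 3)| ≤
        C * Real.exp (-2 * y ^ 2) / y ^ 4 := by
  refine ⟨1, one_pos, -1, by norm_num, fun y hy => ?_⟩
  have hy0 : y < 0 := lt_of_le_of_lt hy (by norm_num)
  obtain ⟨a, ha⟩ : ∃ a : ℝ, a = -4*y := ⟨_, rfl⟩
  have ha4 : (4:ℝ) ≤ a := by rw [ha]; linarith
  have ha0 : (0:ℝ) < a := by linarith
  obtain ⟨b, hbdef⟩ : ∃ b : ℝ, b = 2 / Real.sqrt Real.pi := ⟨_, rfl⟩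
  have hb0 : 0 ≤ b := by rw [hbdef]; positivity
  obtain ⟨g, hgdef⟩ : ∃ g : ℝ → ℝ,
    g = fun t => Real.exp (-(a*t)) * (Real.exp (-2*t^2) * erfc t) := ⟨_, rfl⟩
  obtain ⟨p, hpdef⟩ : ∃ p : ℝ → ℝ,
    p = fun t => Real.exp (-(a*t)) * (1 - b*t - 2*t^2) := ⟨_, rfl⟩
  have hpoint : ∀ t : ℝ, Real.exp (-2 * (t - y) ^ 2) * erfc t
      = Real.exp (-2*y^2) * g t := by
    intro t
    have h1 : Real.exp (-2 * (t - y) ^ 2)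
        = Real.exp (-2*y^2) * Real.exp (-(a*t)) * Real.exp (-2*t^2) := by
      rw [← Real.exp_add, ← Real.exp_add]
      congr 1
      rw [ha]; ring
    rw [hgdef, h1]; ring
  -- integrability facts
  have hIg : IntegrableOn g (Set.Ioi 0) := by
    have h0 : IntegrableOn (fun t : ℝ => Real.exp (-(a*t))) (Set.Ioi 0) := by
      have := integrableOn_pow_exp 0 ha0
      simpa using this
    rw [hgdef]
    apply Integrable.mono' h0
    · exact ((Real.continuous_exp.comp (by continuity)).mul
        ((Real.continuous_exp.comp (by continuity)).mul
          (continuous_const.sub continuous_erf))).aestronglyMeasurable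
    · filter_upwards [ae_restrict_mem measurableSet_Ioi] with t ht
      have ht0 : (0:ℝ) ≤ t := le_of_lt ht
      have h1 := erfc_nonneg t ht0
      have h2 := erfc_le_one t ht0
      have h3 : Real.exp (-2*t^2) ≤ 1 := Real.exp_le_one_iff.mpr (by nlinarith)
      rw [Real.norm_eq_abs]
      have hnn : (0:ℝ) ≤ Real.exp (-(a*t)) * (Real.exp (-2*t^2) * erfc t) :=
        mul_nonneg (Real.exp_pos _).le (mul_nonneg (Real.exp_pos _).le h1)
      rw [abs_of_nonneg hnn]
      have hE1 : Real.exp (-2*t^2) * erfc t ≤ 1 := by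
        nlinarith [mul_le_mul_of_nonneg_left h2 (Real.exp_pos (-2*t^2)).le]
      exact mul_le_of_le_one_right (Real.exp_pos _).le hE1
  have hIp : IntegrableOn p (Set.Ioi 0) := by
    have h := ((integrableOn_pow_exp 0 ha0).sub
      ((integrableOn_pow_exp 1 ha0).const_mul b)).sub ((integrableOn_pow_exp 2 ha0).const_mul 2)
    refine IntegrableOn.congr_fun h ?_ measurableSet_Ioi
    intro t _
    simp only [Pi.sub_apply, hpdef]
    ring
  have hIr : IntegrableOn (fun t => g t - p t) (Set.Ioi 0) := hIg.sub hIp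
  have e0 := integral_pow_exp 0 ha0
  have e1 := integral_pow_exp 1 ha0
  have e2 := integral_pow_exp 2 ha0
  have e3 := integral_pow_exp 3 ha0
  have e4 := integral_pow_exp 4 ha0
  have e5 := integral_pow_exp 5 ha0
  have hIpval : ∫ t in Set.Ioi (0:ℝ), p t = 1/a - b/a^2 - 4/a^3 := by
    have heq : Set.EqOn p (fun t : ℝ => (t^0 * Real.exp (-(a*t)) - b*(t^1 * Real.exp (-(a*t))))
        - 2*(t^2 * Real.exp (-(a*t)))) (Set.Ioi 0) := by
      intro t _
      rw [hpdef]; simp only; ring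
    have s1 : ∫ t in Set.Ioi (0:ℝ), ((t^0 * Real.exp (-(a*t)) - b*(t^1 * Real.exp (-(a*t))))
          - 2*(t^2 * Real.exp (-(a*t))))
        = (∫ t in Set.Ioi (0:ℝ), (t^0 * Real.exp (-(a*t)) - b*(t^1 * Real.exp (-(a*t)))))
          - ∫ t in Set.Ioi (0:ℝ), 2*(t^2 * Real.exp (-(a*t))) :=
      integral_sub ((integrableOn_pow_exp 0 ha0).sub ((integrableOn_pow_exp 1 ha0).const_mul b))
        ((integrableOn_pow_exp 2 ha0).const_mul 2)
    have s2 : ∫ t in Set.Ioi (0:ℝ), (t^0 * Real.exp (-(a*t)) - b*(t^1 * Real.exp (-(a*t))))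
        = (∫ t in Set.Ioi (0:ℝ), t^0 * Real.exp (-(a*t)))
          - ∫ t in Set.Ioi (0:ℝ), b*(t^1 * Real.exp (-(a*t))) :=
      integral_sub (integrableOn_pow_exp 0 ha0) ((integrableOn_pow_exp 1 ha0).const_mul b)
    have s3 : ∫ t in Set.Ioi (0:ℝ), b*(t^1 * Real.exp (-(a*t)))
        = b * ∫ t in Set.Ioi (0:ℝ), t^1 * Real.exp (-(a*t)) := integral_const_mul b _
    have s4 : ∫ t in Set.Ioi (0:ℝ), 2*(t^2 * Real.exp (-(a*t)))
        = 2 * ∫ t in Set.Ioi (0:ℝ), t^2 * Real.exp (-(a*t)) := integral_const_mul 2 _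
    rw [setIntegral_congr_fun measurableSet_Ioi heq, s1, s2, s3, s4, e0, e1, e2]
    simp [Nat.factorial]
    ring
  have hq_int : IntegrableOn (fun t : ℝ => (5*t^3 + 2*t^4 + 2*t^5) * Real.exp (-(a*t)))
      (Set.Ioi 0) := by
    have h := (((integrableOn_pow_exp 3 ha0).const_mul 5).add
      ((integrableOn_pow_exp 4 ha0).const_mul 2)).add ((integrableOn_pow_exp 5 ha0).const_mul 2)
    refine IntegrableOn.congr_fun h ?_ measurableSet_Ioi
    intro t _
    simp only [Pi.add_apply]
    ring
  have hqval : ∫ t in Set.Ioi (0:ℝ), (5*t^3 + 2*t^4 + 2*t^5) * Real.exp (-(a*t))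
      = 30/a^4 + 48/a^5 + 240/a^6 := by
    have heq : Set.EqOn (fun t : ℝ => (5*t^3 + 2*t^4 + 2*t^5) * Real.exp (-(a*t)))
        (fun t : ℝ => (5*(t^3 * Real.exp (-(a*t))) + 2*(t^4 * Real.exp (-(a*t))))
          + 2*(t^5 * Real.exp (-(a*t)))) (Set.Ioi 0) := by
      intro t _; simp only; ring
    have s1 : ∫ t in Set.Ioi (0:ℝ), ((5*(t^3 * Real.exp (-(a*t))) + 2*(t^4 * Real.exp (-(a*t))))
          + 2*(t^5 * Real.exp (-(a*t))))
        = (∫ t in Set.Ioi (0:ℝ), (5*(t^3 * Real.exp (-(a*t))) + 2*(t^4 * Real.exp (-(a*t)))))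
          + ∫ t in Set.Ioi (0:ℝ), 2*(t^5 * Real.exp (-(a*t))) :=
      integral_add (((integrableOn_pow_exp 3 ha0).const_mul 5).add
        ((integrableOn_pow_exp 4 ha0).const_mul 2)) ((integrableOn_pow_exp 5 ha0).const_mul 2)
    have s2 : ∫ t in Set.Ioi (0:ℝ), (5*(t^3 * Real.exp (-(a*t))) + 2*(t^4 * Real.exp (-(a*t))))
        = (∫ t in Set.Ioi (0:ℝ), 5*(t^3 * Real.exp (-(a*t))))
          + ∫ t in Set.Ioi (0:ℝ), 2*(t^4 * Real.exp (-(a*t))) :=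
      integral_add ((integrableOn_pow_exp 3 ha0).const_mul 5)
        ((integrableOn_pow_exp 4 ha0).const_mul 2)
    rw [setIntegral_congr_fun measurableSet_Ioi heq, s1, s2, integral_const_mul,
      integral_const_mul, integral_const_mul, e3, e4, e5]
    simp [Nat.factorial]
    ring
  have hrbound : |∫ t in Set.Ioi (0:ℝ), (g t - p t)| ≤ 57/a^4 := by
    have step1 : |∫ t in Set.Ioi (0:ℝ), (g t - p t)| ≤ ∫ t in Set.Ioi (0:ℝ), |g t - p t| := by
      simpa [Real.norm_eq_abs] using
        norm_integral_le_integral_norm (μ := volume.restrict (Set.Ioi 0)) (fun t => g t - p t)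
    have step2 : ∫ t in Set.Ioi (0:ℝ), |g t - p t|
        ≤ ∫ t in Set.Ioi (0:ℝ), (5*t^3 + 2*t^4 + 2*t^5) * Real.exp (-(a*t)) := by
      apply setIntegral_mono_on hIr.abs hq_int measurableSet_Ioi
      intro t ht
      have ht0 : (0:ℝ) ≤ t := le_of_lt ht
      have hfac : g t - p t
          = Real.exp (-(a*t)) * (Real.exp (-2*t^2) * erfc t - (1 - (2/Real.sqrt Real.pi)*t - 2*t^2)) := by
        rw [hgdef, hpdef, hbdef]; ring
      rw [hfac, abs_mul, abs_of_nonneg (Real.exp_pos _).le, mul_comm]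
      exact mul_le_mul_of_nonneg_right (key_pointwise t ht0) (Real.exp_pos _).le
    have hpow4 : (0:ℝ) < a^4 := by positivity
    have step3 : 30/a^4 + 48/a^5 + 240/a^6 ≤ 57/a^4 := by
      have h1 : 48/a^5 ≤ 12/a^4 := by
        rw [div_le_div_iff₀ (by positivity) hpow4]
        nlinarith [mul_le_mul_of_nonneg_right ha4 hpow4.le]
      have h2 : 240/a^6 ≤ 15/a^4 := by
        rw [div_le_div_iff₀ (by positivity) hpow4]
        have h16 : (16:ℝ) ≤ a^2 := by nlinarith
        nlinarith [mul_le_mul_of_nonneg_right h16 hpow4.le]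
      calc 30/a^4 + 48/a^5 + 240/a^6 ≤ 30/a^4 + 12/a^4 + 15/a^4 :=
            add_le_add (add_le_add le_rfl h1) h2
        _ = 57/a^4 := by ring
    calc |∫ t in Set.Ioi (0:ℝ), (g t - p t)| ≤ _ := step1
      _ ≤ _ := step2
      _ = 30/a^4 + 48/a^5 + 240/a^6 := hqval
      _ ≤ 57/a^4 := step3
  have hsub : ∫ t in Set.Ioi (0:ℝ), (g t - p t)
      = (∫ t in Set.Ioi (0:ℝ), g t) - ∫ t in Set.Ioi (0:ℝ), p t := integral_sub hIg hIp
  have hIeq : (∫ t in Set.Ioi (0:ℝ), Real.exp (-2 * (t - y) ^ 2) * erfc t)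
      = Real.exp (-2*y^2) * ∫ t in Set.Ioi (0:ℝ), g t := by
    rw [← integral_const_mul]
    exact setIntegral_congr_fun measurableSet_Ioi (fun t _ => hpoint t)
  have hA1 : A₁ y = -(1 / (2 * Real.sqrt (2 * Real.pi))) * (Real.exp (-2*y^2) *
      ((1/a - b/a^2 - 4/a^3) + ∫ t in Set.Ioi (0:ℝ), (g t - p t))) := by
    rw [A₁, hIeq, hsub, hIpval]
    ring
  have hM := main_term_eq y hy0
  rw [← ha, ← hbdef] at hM
  have hdiff : A₁ y -
      (-(1 / (8 * Real.sqrt (2 * Real.pi))) * Real.exp (-2 * y ^ 2) / |y| +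
        (1 / (16 * Real.pi * Real.sqrt 2)) * Real.exp (-2 * y ^ 2) / y ^ 2 +
        (1 / (32 * Real.sqrt (2 * Real.pi))) * Real.exp (-2 * y ^ 2) / |y| ^ 3)
      = -(1 / (2 * Real.sqrt (2 * Real.pi))) *
          (Real.exp (-2*y^2) * ∫ t in Set.Ioi (0:ℝ), (g t - p t)) := by
    rw [hA1, ← hM]
    ring
  rw [hdiff]
  have hcpos : (0:ℝ) < 1 / (2 * Real.sqrt (2 * Real.pi)) := by positivity
  have hcle : 1 / (2 * Real.sqrt (2 * Real.pi)) ≤ 1/4 := by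
    have h4 : Real.sqrt 4 = 2 := by
      rw [show (4:ℝ) = 2^2 by norm_num, Real.sqrt_sq (by norm_num)]
    have h2le : (2:ℝ) ≤ Real.sqrt (2*Real.pi) :=
      le_trans (le_of_eq h4.symm) (Real.sqrt_le_sqrt (by nlinarith [Real.pi_gt_three]))
    rw [div_le_div_iff₀ (by positivity) (by norm_num)]
    linarith
  have hepos := Real.exp_pos (-2*y^2)
  have hy4 : (0:ℝ) < y^4 := by
    calc (0:ℝ) < (-y)^4 := pow_pos (neg_pos.mpr hy0) 4
      _ = y^4 := by ring
  have h57 : |∫ t in Set.Ioi (0:ℝ), (g t - p t)| ≤ 57/(256*y^4) := by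
    have ha4y : a^4 = 256*y^4 := by rw [ha]; ring
    rw [← ha4y]; exact hrbound
  have habs0 : (0:ℝ) ≤ |∫ t in Set.Ioi (0:ℝ), (g t - p t)| := abs_nonneg _
  rw [abs_mul, abs_mul, abs_of_pos hepos, abs_neg, abs_of_pos hcpos]
  calc (1 / (2 * Real.sqrt (2 * Real.pi))) *
        (Real.exp (-2*y^2) * |∫ t in Set.Ioi (0:ℝ), (g t - p t)|)
      ≤ (1/4) * (Real.exp (-2*y^2) * (57/(256*y^4))) := by
        apply mul_le_mul hcle (mul_le_mul_of_nonneg_left h57 hepos.le)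
          (mul_nonneg hepos.le habs0) (by norm_num)
    _ = (57/1024) * (Real.exp (-2*y^2)/y^4) := by ring
    _ ≤ 1 * (Real.exp (-2*y^2)/y^4) := by
        have hfrac : (0:ℝ) < Real.exp (-2*y^2)/y^4 := div_pos hepos hy4
        nlinarith [hfrac]
    _ = 1 * Real.exp (-2 * y ^ 2) / y ^ 4 := by ring
end

section
/- There exist constants C > 0 and y₀ < 0 such that for all y ≤ y₀, | A₃(y) − (1/(2√(2π))) |y| e^{−2y²} | ≤ C e^{−2y²}/|y|³; that is, A₃(y) = (1/(2√(2π))) |y| e^{−2y²} + O(y^{−3} e^{−2y²}) as y → −∞. -/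
open MeasureTheory Real Filter

section A3AuxLemmas

private lemma gauss_tail_integrable (x : ℝ) :
    IntegrableOn (fun t : ℝ => Real.exp (-t ^ 2)) (Set.Ioi x) := by
  have := integrable_exp_neg_mul_sq (b := 1) one_pos
  simpa using this.integrableOn

private lemma gauss_tendsto_zero :
    Tendsto (fun t : ℝ => Real.exp (-t ^ 2)) atTop (nhds 0) := by
  apply Real.tendsto_exp_atBot.comp
  exact tendsto_neg_atBot_iff.mpr (tendsto_pow_atTop two_ne_zero)

private lemma frac_tendsto_zero (c : ℝ) (n : ℕ) (hn : n ≠ 0) (hc : 0 < c) :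
    Tendsto (fun t : ℝ => 1 / (c * t ^ n)) atTop (nhds 0) := by
  exact Tendsto.div_atTop tendsto_const_nhds ((tendsto_pow_atTop hn).const_mul_atTop hc)

private lemma deriv_lower {t : ℝ} (ht : 0 < t) :
    HasDerivAt (fun t : ℝ => -Real.exp (-t ^ 2) * (1 / (2 * t) - 1 / (4 * t ^ 3)))
      (Real.exp (-t ^ 2) * (1 - 3 / (4 * t ^ 4))) t := by
  have h1 : HasDerivAt (fun t : ℝ => Real.exp (-t ^ 2)) (Real.exp (-t ^ 2) * (-(2 * t ^ 1))) t :=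
    ((hasDerivAt_pow 2 t).neg).exp
  have h2 : HasDerivAt (fun t : ℝ => 1 / (2 * t) - 1 / (4 * t ^ 3))
      (-(2 * 1) / (2 * t) ^ 2 - -(4 * (3 * t ^ 2)) / (4 * t ^ 3) ^ 2) t := by
    have ha : HasDerivAt (fun t : ℝ => 2 * t) (2 * 1) t := (hasDerivAt_id t).const_mul 2
    have hb : HasDerivAt (fun t : ℝ => 4 * t ^ 3) (4 * (3 * t ^ 2)) t :=
      (hasDerivAt_pow 3 t).const_mul 4
    simpa [one_div] using ((ha.fun_inv (by positivity)).fun_sub (hb.fun_inv (by positivity)))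
  refine (h1.fun_neg.fun_mul h2).congr_deriv ?_
  field_simp
  ring

private lemma deriv_upper {t : ℝ} (ht : 0 < t) :
    HasDerivAt (fun t : ℝ => Real.exp (-t ^ 2) * (1 / (2 * t) - 1 / (4 * t ^ 3) + 3 / (8 * t ^ 5)))
      (-(Real.exp (-t ^ 2) * (1 + 15 / (8 * t ^ 6)))) t := by
  have h1 : HasDerivAt (fun t : ℝ => Real.exp (-t ^ 2)) (Real.exp (-t ^ 2) * (-(2 * t ^ 1))) t :=
    ((hasDerivAt_pow 2 t).neg).exp
  have h2 : HasDerivAt (fun t : ℝ => 1 / (2 * t) - 1 / (4 * t ^ 3) + 3 / (8 * t ^ 5))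
      ((-(2 * 1) / (2 * t) ^ 2 - -(4 * (3 * t ^ 2)) / (4 * t ^ 3) ^ 2) +
        3 * (-(8 * (5 * t ^ 4)) / (8 * t ^ 5) ^ 2)) t := by
    have ha : HasDerivAt (fun t : ℝ => 2 * t) (2 * 1) t := (hasDerivAt_id t).const_mul 2
    have hb : HasDerivAt (fun t : ℝ => 4 * t ^ 3) (4 * (3 * t ^ 2)) t :=
      (hasDerivAt_pow 3 t).const_mul 4
    have hc : HasDerivAt (fun t : ℝ => 8 * t ^ 5) (8 * (5 * t ^ 4)) t :=
      (hasDerivAt_pow 5 t).const_mul 8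
    simpa [one_div, div_eq_mul_inv, mul_inv, mul_comm, mul_left_comm] using
      (((ha.fun_inv (by positivity)).fun_sub (hb.fun_inv (by positivity))).fun_add
        ((hc.fun_inv (by positivity)).const_mul 3))
  refine (h1.fun_mul h2).congr_deriv ?_
  field_simp
  ring

private lemma gauss_tail_lower {x : ℝ} (hx : 1 ≤ x) :
    Real.exp (-x ^ 2) * (1 / (2 * x) - 1 / (4 * x ^ 3)) ≤
      ∫ t in Set.Ioi x, Real.exp (-t ^ 2) := by
  have hx0 : 0 < x := lt_of_lt_of_le one_pos hx
  have hint : IntegrableOn (fun t : ℝ => Real.exp (-t ^ 2) * (1 - 3 / (4 * t ^ 4)))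
      (Set.Ioi x) := by
    apply Integrable.mono (gauss_tail_integrable x)
    · apply Measurable.aestronglyMeasurable; fun_prop
    · filter_upwards [ae_restrict_mem measurableSet_Ioi] with t ht
      have ht1 : (1 : ℝ) < t := lt_of_le_of_lt hx ht
      have ht4 : (1 : ℝ) ≤ t ^ 4 := one_le_pow₀ ht1.le
      have h4 : (0:ℝ) < 4 * t ^ 4 := by positivity
      have h3 : 3 / (4 * t ^ 4) ≤ 1 := by rw [div_le_one h4]; linarith
      have h3' : 0 ≤ 3 / (4 * t ^ 4) := by positivity
      rw [Real.norm_eq_abs, Real.norm_eq_abs,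
        abs_of_nonneg (mul_nonneg (Real.exp_pos _).le (by linarith)),
        abs_of_nonneg (Real.exp_pos _).le]
      nlinarith [mul_nonneg (Real.exp_pos (-t^2)).le h3']
  have hftc : ∫ t in Set.Ioi x, Real.exp (-t ^ 2) * (1 - 3 / (4 * t ^ 4)) =
      0 - (-Real.exp (-x ^ 2) * (1 / (2 * x) - 1 / (4 * x ^ 3))) := by
    apply integral_Ioi_of_hasDerivAt_of_tendsto' (f := fun t : ℝ =>
      -Real.exp (-t ^ 2) * (1 / (2 * t) - 1 / (4 * t ^ 3)))
    · intro t ht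
      exact deriv_lower (lt_of_lt_of_le hx0 ht)
    · exact hint
    · have := (((frac_tendsto_zero 2 1 one_ne_zero two_pos).sub
        (frac_tendsto_zero 4 3 three_ne_zero four_pos)).mul gauss_tendsto_zero).neg
      simp only [mul_zero, sub_zero, neg_zero, sub_self, pow_one] at this ⊢
      convert this using 2 with t
      ring
  have hmono : ∫ t in Set.Ioi x, Real.exp (-t ^ 2) * (1 - 3 / (4 * t ^ 4)) ≤
      ∫ t in Set.Ioi x, Real.exp (-t ^ 2) := by
    apply setIntegral_mono_on hint (gauss_tail_integrable x) measurableSet_Ioi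
    intro t ht
    have ht0 : (0:ℝ) < t := lt_of_lt_of_le hx0 (le_of_lt ht)
    have h3' : 0 ≤ 3 / (4 * t ^ 4) := by positivity
    nlinarith [mul_nonneg (Real.exp_pos (-t^2)).le h3']
  linarith [hmono, hftc.symm.le, hftc.le]

private lemma gauss_tail_upper {x : ℝ} (hx : 1 ≤ x) :
    (∫ t in Set.Ioi x, Real.exp (-t ^ 2)) ≤
      Real.exp (-x ^ 2) * (1 / (2 * x) - 1 / (4 * x ^ 3) + 3 / (8 * x ^ 5)) := by
  have hx0 : 0 < x := lt_of_lt_of_le one_pos hx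
  have hint : IntegrableOn (fun t : ℝ => Real.exp (-t ^ 2) * (1 + 15 / (8 * t ^ 6)))
      (Set.Ioi x) := by
    apply Integrable.mono ((gauss_tail_integrable x).const_mul 3)
    · apply Measurable.aestronglyMeasurable; fun_prop
    · filter_upwards [ae_restrict_mem measurableSet_Ioi] with t ht
      have ht1 : (1 : ℝ) < t := lt_of_le_of_lt hx ht
      have ht6 : (1 : ℝ) ≤ t ^ 6 := one_le_pow₀ ht1.le
      have h8 : (0:ℝ) < 8 * t ^ 6 := by positivity
      have h3 : 15 / (8 * t ^ 6) ≤ 2 := by rw [div_le_iff₀ h8]; linarith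
      have h3' : 0 ≤ 15 / (8 * t ^ 6) := by positivity
      rw [Real.norm_eq_abs, Real.norm_eq_abs,
        abs_of_nonneg (mul_nonneg (Real.exp_pos _).le (by linarith)),
        abs_of_nonneg (by positivity : (0:ℝ) ≤ 3 * Real.exp (-t^2))]
      nlinarith [Real.exp_pos (-t^2)]
  have hftc : ∫ t in Set.Ioi x, -(Real.exp (-t ^ 2) * (1 + 15 / (8 * t ^ 6))) =
      0 - (Real.exp (-x ^ 2) * (1 / (2 * x) - 1 / (4 * x ^ 3) + 3 / (8 * x ^ 5))) := by
    apply integral_Ioi_of_hasDerivAt_of_tendsto' (f := fun t : ℝ =>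
      Real.exp (-t ^ 2) * (1 / (2 * t) - 1 / (4 * t ^ 3) + 3 / (8 * t ^ 5)))
    · intro t ht
      exact deriv_upper (lt_of_lt_of_le hx0 ht)
    · exact hint.neg
    · have h3t : Tendsto (fun t : ℝ => 3 / (8 * t ^ 5)) atTop (nhds 0) :=
        Tendsto.div_atTop tendsto_const_nhds
          ((tendsto_pow_atTop (by norm_num)).const_mul_atTop (by norm_num))
      have := gauss_tendsto_zero.mul (((frac_tendsto_zero 2 1 one_ne_zero two_pos).sub
        (frac_tendsto_zero 4 3 three_ne_zero four_pos)).add h3t)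
      simp only [mul_zero, zero_mul, add_zero, sub_zero, zero_sub, neg_zero, pow_one]
        at this ⊢
      exact this
  have hftc' : ∫ t in Set.Ioi x, Real.exp (-t ^ 2) * (1 + 15 / (8 * t ^ 6)) =
      Real.exp (-x ^ 2) * (1 / (2 * x) - 1 / (4 * x ^ 3) + 3 / (8 * x ^ 5)) := by
    have := integral_neg (μ := volume.restrict (Set.Ioi x))
      (f := fun t : ℝ => Real.exp (-t ^ 2) * (1 + 15 / (8 * t ^ 6)))
    rw [this] at hftc
    linarith [hftc]
  have hmono : ∫ t in Set.Ioi x, Real.exp (-t ^ 2) ≤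
      ∫ t in Set.Ioi x, Real.exp (-t ^ 2) * (1 + 15 / (8 * t ^ 6)) := by
    apply setIntegral_mono_on (gauss_tail_integrable x) hint measurableSet_Ioi
    intro t ht
    have ht0 : (0:ℝ) < t := lt_of_lt_of_le hx0 (le_of_lt ht)
    have h3' : 0 ≤ 15 / (8 * t ^ 6) := by positivity
    nlinarith [mul_nonneg (Real.exp_pos (-t^2)).le h3']
  linarith [hmono, hftc'.le]

private lemma erf_neg (x : ℝ) : erf (-x) = -erf x := by
  unfold erf
  have h : ∫ t in (0 : ℝ)..(-x), Real.exp (-t ^ 2) =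
      -∫ t in (0 : ℝ)..x, Real.exp (-t ^ 2) := by
    have h2 := intervalIntegral.integral_comp_neg (a := (0:ℝ)) (b := -x)
      (f := fun t => Real.exp (-t ^ 2))
    simp only [neg_sq, neg_neg, neg_zero] at h2
    rw [h2, intervalIntegral.integral_symm]
  rw [h]; ring

private lemma erfc_eq_tail {x : ℝ} (hx : 0 ≤ x) :
    erfc x = (2 / Real.sqrt Real.pi) * ∫ t in Set.Ioi x, Real.exp (-t ^ 2) := by
  have hsplit : (∫ t in Set.Ioi (0:ℝ), Real.exp (-t ^ 2)) =
      (∫ t in Set.Ioc (0:ℝ) x, Real.exp (-t ^ 2)) + ∫ t in Set.Ioi x, Real.exp (-t ^ 2) := by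
    rw [← setIntegral_union (Set.Ioc_disjoint_Ioi le_rfl) measurableSet_Ioi
      ((gauss_tail_integrable 0).mono_set Set.Ioc_subset_Ioi_self)
      (gauss_tail_integrable x), Set.Ioc_union_Ioi_eq_Ioi hx]
  have hgauss : (∫ t in Set.Ioi (0:ℝ), Real.exp (-t ^ 2)) = Real.sqrt Real.pi / 2 := by
    have := integral_gaussian_Ioi 1
    simpa using this
  have hival : ∫ t in (0 : ℝ)..x, Real.exp (-t ^ 2) =
      ∫ t in Set.Ioc (0:ℝ) x, Real.exp (-t ^ 2) := intervalIntegral.integral_of_le hx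
  have hπ : Real.sqrt Real.pi ≠ 0 := by positivity
  unfold erfc erf
  rw [hival]
  have : (∫ t in Set.Ioc (0:ℝ) x, Real.exp (-t ^ 2)) =
      Real.sqrt Real.pi / 2 - ∫ t in Set.Ioi x, Real.exp (-t ^ 2) := by
    rw [← hgauss, hsplit]; ring
  rw [this]
  field_simp
  ring

private lemma erfc_bound_lo {q : ℝ} (hq : 1 ≤ q) :
    Real.exp (-2*q^2) / (Real.sqrt (2*Real.pi) * q) * (1 - 1/(4*q^2)) ≤
      erfc (Real.sqrt 2 * q) := by
  have ha0 : (0:ℝ) < Real.sqrt 2 := by positivity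
  have ha1 : (1:ℝ) ≤ Real.sqrt 2 := by
    rw [show (1:ℝ) = Real.sqrt 1 by simp]; exact Real.sqrt_le_sqrt (by norm_num)
  have hX1 : 1 ≤ Real.sqrt 2 * q := by nlinarith
  have hp0 : (0:ℝ) < Real.sqrt Real.pi := Real.sqrt_pos.mpr Real.pi_pos
  have hq0 : (0:ℝ) < q := by linarith
  have ha2 : Real.sqrt 2 ^ 2 = 2 := Real.sq_sqrt (by norm_num)
  have hc : Real.sqrt (2*Real.pi) = Real.sqrt 2 * Real.sqrt Real.pi :=
    Real.sqrt_mul (by norm_num) _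
  have hX2 : (Real.sqrt 2 * q) ^ 2 = 2 * q ^ 2 := by rw [mul_pow, ha2]
  rw [erfc_eq_tail (by linarith : (0:ℝ) ≤ Real.sqrt 2 * q)]
  have h := gauss_tail_lower hX1
  have step : Real.exp (-2*q^2) / (Real.sqrt (2*Real.pi) * q) * (1 - 1/(4*q^2)) =
      (2 / Real.sqrt Real.pi) *
        (Real.exp (-(Real.sqrt 2 * q) ^ 2) *
          (1 / (2 * (Real.sqrt 2 * q)) - 1 / (4 * (Real.sqrt 2 * q) ^ 3))) := by
    rw [hX2, hc]
    have h3 : (Real.sqrt 2 * q) ^ 3 = 2 * Real.sqrt 2 * q ^ 3 := by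
      rw [mul_pow, pow_succ, ha2]
    rw [h3, neg_mul]
    field_simp
  rw [step]
  have h2p : (0:ℝ) ≤ 2 / Real.sqrt Real.pi := by positivity
  exact mul_le_mul_of_nonneg_left h h2p

private lemma erfc_bound_hi {q : ℝ} (hq : 1 ≤ q) :
    erfc (Real.sqrt 2 * q) ≤
      Real.exp (-2*q^2) / (Real.sqrt (2*Real.pi) * q) * (1 - 1/(4*q^2) + 3/(16*q^4)) := by
  have ha0 : (0:ℝ) < Real.sqrt 2 := by positivity
  have ha1 : (1:ℝ) ≤ Real.sqrt 2 := by
    rw [show (1:ℝ) = Real.sqrt 1 by simp]; exact Real.sqrt_le_sqrt (by norm_num)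
  have hX1 : 1 ≤ Real.sqrt 2 * q := by nlinarith
  have hp0 : (0:ℝ) < Real.sqrt Real.pi := Real.sqrt_pos.mpr Real.pi_pos
  have hq0 : (0:ℝ) < q := by linarith
  have ha2 : Real.sqrt 2 ^ 2 = 2 := Real.sq_sqrt (by norm_num)
  have hc : Real.sqrt (2*Real.pi) = Real.sqrt 2 * Real.sqrt Real.pi :=
    Real.sqrt_mul (by norm_num) _
  have hX2 : (Real.sqrt 2 * q) ^ 2 = 2 * q ^ 2 := by rw [mul_pow, ha2]
  rw [erfc_eq_tail (by linarith : (0:ℝ) ≤ Real.sqrt 2 * q)]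
  have h := gauss_tail_upper hX1
  have step : Real.exp (-2*q^2) / (Real.sqrt (2*Real.pi) * q) * (1 - 1/(4*q^2) + 3/(16*q^4)) =
      (2 / Real.sqrt Real.pi) *
        (Real.exp (-(Real.sqrt 2 * q) ^ 2) *
          (1 / (2 * (Real.sqrt 2 * q)) - 1 / (4 * (Real.sqrt 2 * q) ^ 3)
            + 3 / (8 * (Real.sqrt 2 * q) ^ 5))) := by
    rw [hX2, hc]
    have h3 : (Real.sqrt 2 * q) ^ 3 = 2 * Real.sqrt 2 * q ^ 3 := by
      rw [mul_pow, pow_succ, ha2]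
    have h5 : (Real.sqrt 2 * q) ^ 5 = 4 * Real.sqrt 2 * q ^ 5 := by
      rw [mul_pow, show (5:ℕ) = 2 + 2 + 1 by norm_num, pow_add, pow_add, ha2, pow_one]; ring
    rw [h3, h5, neg_mul]
    field_simp
    ring_nf
  rw [step]
  have h2p : (0:ℝ) ≤ 2 / Real.sqrt Real.pi := by positivity
  exact mul_le_mul_of_nonneg_left h h2p

end A3AuxLemmas

set_option maxHeartbeats 2000000 in
/-- `A₃(y) = (1/(2√(2π))) |y| e^{−2y²} + O(y^{−3} e^{−2y²})` as `y → −∞`. -/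
theorem A3_asymptotics :
    ∃ C > (0 : ℝ), ∃ y₀ < (0 : ℝ), ∀ y ≤ y₀,
      |A₃ y - (1 / (2 * Real.sqrt (2 * Real.pi))) * |y| * Real.exp (-2 * y ^ 2)| ≤
        C * Real.exp (-2 * y ^ 2) / |y| ^ 3 := by
  refine ⟨2, by norm_num, -1, by norm_num, fun y hy => ?_⟩
  have hy0 : y < 0 := by linarith
  set q : ℝ := -y with hqdef
  have hq : 1 ≤ q := by simp only [hqdef]; linarith
  have hq0 : (0:ℝ) < q := by linarith
  have hyq : y = -q := by rw [hqdef]; ring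
  have habs : |y| = q := by rw [abs_of_neg hy0]
  set c : ℝ := Real.sqrt (2*Real.pi) with hcdef
  have hc0 : (0:ℝ) < c := Real.sqrt_pos.mpr (by positivity)
  have hc2 : (2:ℝ) ≤ c := by
    nlinarith [Real.sq_sqrt (show (0:ℝ) ≤ 2*Real.pi by positivity), Real.pi_gt_three,
      hc0, sq_nonneg (c-2), sq_nonneg (c+2)]
  set e : ℝ := Real.exp (-2*q^2) with hedef
  have he0 : (0:ℝ) < e := Real.exp_pos _
  have heq4 : e * q^4 ≤ 1 := by
    have h1 : q^2 ≤ Real.exp (q^2) := by nlinarith [Real.add_one_le_exp (q^2)]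
    have h2 : q^4 ≤ Real.exp (2*q^2) := by
      rw [show (2:ℝ)*q^2 = q^2 + q^2 by ring, Real.exp_add]
      nlinarith [sq_nonneg q, Real.exp_pos (q^2)]
    rw [hedef, show (-2:ℝ)*q^2 = -(2*q^2) by ring, Real.exp_neg]
    rw [inv_mul_le_iff₀ (Real.exp_pos _)]
    simpa using h2
  set E : ℝ := erfc (Real.sqrt 2 * q) with hEdef
  set s : ℝ := e / (c*q) with hsdef
  have hs0 : (0:ℝ) < s := by positivity
  have hsc : s * (c * q) = e := by rw [hsdef]; field_simp
  -- bounds on E, in polynomial form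
  have hlo := erfc_bound_lo hq
  have hhi := erfc_bound_hi hq
  rw [← hedef, ← hcdef, ← hEdef] at hlo hhi
  have hq2 : (1:ℝ) ≤ q^2 := by nlinarith
  have hElo : s * (4*q^2 - 1) ≤ 4*q^2 * E := by
    have h1 : e / (c*q) * (1 - 1/(4*q^2)) = s * (4*q^2-1) / (4*q^2) := by
      rw [hsdef]; field_simp
    rw [h1, div_le_iff₀ (by positivity : (0:ℝ) < 4*q^2)] at hlo
    linarith [hlo]
  have hEhi : 16*q^4 * E ≤ s * (16*q^4 - 4*q^2 + 3) := by
    have h2 : e / (c*q) * (1 - 1/(4*q^2) + 3/(16*q^4)) = s * (16*q^4 - 4*q^2 + 3) / (16*q^4) := by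
      rw [hsdef]; field_simp; ring
    rw [h2, le_div_iff₀ (by positivity : (0:ℝ) < 16*q^4)] at hhi
    linarith [hhi]
  have hE0 : 0 ≤ E := by
    nlinarith [hElo, mul_nonneg hs0.le (show (0:ℝ) ≤ 4*q^2-1 by nlinarith), mul_pos hq0 hq0]
  have hEs : E ≤ s := by
    nlinarith [hEhi, mul_nonneg hs0.le (show (0:ℝ) ≤ 4*q^2-3 by nlinarith),
      mul_pos (mul_pos hq0 hq0) (mul_pos hq0 hq0)]
  have hsmall : s * (c * q^5) ≤ 1 := by
    have : s * (c*q^5) = (s * (c*q)) * q^4 := by ring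
    rw [this, hsc]; exact heq4
  -- rewrite A₃
  have hA : A₃ y = (1/4) * E * (q*e/c + (1/4+q^2)*(2-E)) := by
    unfold A₃
    rw [show Real.sqrt 2 * y = -(Real.sqrt 2 * q) by rw [hyq]; ring, erf_neg]
    have hEe : erf (Real.sqrt 2 * q) = 1 - E := by rw [hEdef]; unfold erfc; ring
    rw [hEe, hyq, hedef]
    rw [show -2*(-q)^2 = -2*q^2 by ring]
    ring
  -- final bound
  have hey : Real.exp (-2*y^2) = e := by rw [hedef, hyq, neg_sq]
  have hq3 : (0:ℝ) < q^3 := by positivity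
  rw [habs, hA, show Real.exp (-2*y^2) = e from hey]
  clear_value q c e E s
  clear hlo hhi hA hey hedef hcdef hEdef hsdef hqdef hyq habs hy hy0 heq4
  have hXT : (1/4*E*(q*e/c + (1/4+q^2)*(2-E)) - 1/(2*c)*q*e)*q^3
      = 1/4*E*s*q^5 + 1/4*E*(1/4+q^2)*(2-E)*q^3 - 1/2*s*q^5 := by
    rw [← hsc]; field_simp
  have hints1 : E*(s*q^5) ≤ s*(s*q^5) :=
    mul_le_mul_of_nonneg_right hEs (by positivity)
  have hints2 : s*(s*(c*q^5)) ≤ s*1 := mul_le_mul_of_nonneg_left hsmall hs0.le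
  have hints3 : 16*q^4*E*q ≤ s*(16*q^4-4*q^2+3)*q :=
    mul_le_mul_of_nonneg_right hEhi hq0.le
  have hints4 : E*q^3 ≤ s*q^3 := mul_le_mul_of_nonneg_right hEs (by positivity)
  have hints5 : 0 ≤ s*(q-1) := mul_nonneg hs0.le (by linarith)
  have hints6 : 0 ≤ s*q*(c-2) := mul_nonneg (by positivity) (by linarith)
  have hints7 : 0 ≤ E*E*q^3 := by positivity
  have hints8 : 0 ≤ E*E*q^5 := by positivity
  have hints9 : s*(4*q^2-1)*q ≤ 4*q^2*E*q :=
    mul_le_mul_of_nonneg_right hElo hq0.le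
  have hints10 : s*(4*q^2-1)*q^3 ≤ 4*q^2*E*q^3 :=
    mul_le_mul_of_nonneg_right hElo (by positivity)
  have hints11 : E*E ≤ s*s := mul_le_mul hEs hEs hE0 hs0.le
  have hints12 : E*E*q^5 ≤ s*s*q^5 :=
    mul_le_mul_of_nonneg_right hints11 (by positivity)
  have hints13 : E*E*q^3 ≤ s*s*q^3 :=
    mul_le_mul_of_nonneg_right hints11 (by positivity)
  have hints14 : s*s*q^3 ≤ s*s*q^5 := by nlinarith [mul_nonneg (mul_nonneg hs0.le hs0.le) (by positivity : (0:ℝ) ≤ q^3)]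
  have hints15 : 0 ≤ E*(s*q^5) := by positivity
  rw [abs_le]
  constructor
  · rw [neg_le, neg_sub, le_div_iff₀ hq3]
    have h2 : (1/(2*c)*q*e - 1/4*E*(q*e/c + (1/4+q^2)*(2-E)))*q^3
        = -(1/4*E*s*q^5 + 1/4*E*(1/4+q^2)*(2-E)*q^3 - 1/2*s*q^5) := by
      linear_combination -hXT
    rw [h2, ← hsc]
    nlinarith [hints9, hints10, hints12, hints13, hints14, hints15, hints4, hints5,
      hints6, hints2, hs0, hq0, hc2]
  · rw [le_div_iff₀ hq3, hXT, ← hsc]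
    nlinarith [hints1, hints2, hints3, hints4, hints5, hints6, hints7, hints8,
      hs0, hq0, hc2]
end
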